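/- The Grover iterate satisfies G^r |φ⟩ = cos((2r+1)θ/2)|¬m⟩ + sin((2r+1)θ/2)|m⟩ for all r ∈ ℕ, where |φ⟩ = (1/√(2^n)) Σ_x |x⟩, sin θ = 2√(2^n − 1)/2^n with 0 ≤ θ ≤ π/2, |¬m⟩ = (1/√(2^n − 1)) Σ_{x≠m} |x⟩, and G = D·O acts on the 2-dimensional real span of |m⟩ and |¬m⟩ as a rotation by angle θ. -/

import Mathlib

open Matrix

/-- The uniform superposition state `|φ⟩` on `n` qubits. -/
noncomputable def uniformState (n : ℕ) : Fin (2 ^ n) → ℂ :=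
  fun _ => ((1 / Real.sqrt (2 ^ n) : ℝ) : ℂ)

/-- The basis state `|m⟩`. -/
def basisState (n : ℕ) (m : Fin (2 ^ n)) : Fin (2 ^ n) → ℂ :=
  fun x => if x = m then 1 else 0

/-- The state `|¬m⟩`, the uniform superposition over unmarked elements. -/
noncomputable def notMState (n : ℕ) (m : Fin (2 ^ n)) : Fin (2 ^ n) → ℂ :=
  fun x => if x = m then 0 else ((1 / Real.sqrt ((2 ^ n : ℝ) - 1) : ℝ) : ℂ)

/-- The Grover oracle: `O|x⟩ = (−1)^{h(x)}|x⟩` with unique marked element `m`. -/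
def oracleMat (n : ℕ) (m : Fin (2 ^ n)) : Matrix (Fin (2 ^ n)) (Fin (2 ^ n)) ℂ :=
  Matrix.diagonal fun x => if x = m then -1 else 1

/-- The diffusion operator `D = 2|φ⟩⟨φ| − I`. -/
noncomputable def diffusionMat (n : ℕ) : Matrix (Fin (2 ^ n)) (Fin (2 ^ n)) ℂ :=
  (2 : ℂ) • Matrix.vecMulVec (uniformState n) (star (uniformState n)) - 1

/-- The Grover iterate `G = D·O`. -/
noncomputable def groverMat (n : ℕ) (m : Fin (2 ^ n)) :
    Matrix (Fin (2 ^ n)) (Fin (2 ^ n)) ℂ :=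
  diffusionMat n * oracleMat n m

set_option maxHeartbeats 1600000 in
/-- Geometric representation of Grover's algorithm:
`G^r|φ⟩ = cos((2r+1)θ/2)|¬m⟩ + sin((2r+1)θ/2)|m⟩`. -/
theorem stmt14 (n : ℕ) (hn : 1 ≤ n) (m : Fin (2 ^ n)) (θ : ℝ)
    (hθ0 : 0 ≤ θ) (hθ1 : θ ≤ Real.pi / 2)
    (hsin : Real.sin θ = 2 * Real.sqrt ((2 ^ n : ℝ) - 1) / 2 ^ n) :
    ∀ r : ℕ, (groverMat n m ^ r) *ᵥ uniformState n = fun x =>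
      ((Real.cos ((2 * (r : ℝ) + 1) * θ / 2) : ℝ) : ℂ) * notMState n m x +
      ((Real.sin ((2 * (r : ℝ) + 1) * θ / 2) : ℝ) : ℂ) * basisState n m x := by
  have hN2 : (2:ℝ) ≤ 2 ^ n := by
    calc (2:ℝ) = 2 ^ 1 := by norm_num
    _ ≤ 2 ^ n := by
      apply pow_le_pow_right₀ (by norm_num) hn
  set N : ℝ := 2 ^ n with hNdef
  have hq2 : Real.sqrt N ^ 2 = N := Real.sq_sqrt (by linarith)
  have hp2 : Real.sqrt (N - 1) ^ 2 = N - 1 := Real.sq_sqrt (by linarith)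
  have hq0 : 0 < Real.sqrt N := Real.sqrt_pos.mpr (by linarith)
  have hp0 : 0 < Real.sqrt (N - 1) := Real.sqrt_pos.mpr (by linarith)
  set q : ℝ := Real.sqrt N with hqdef
  set p : ℝ := Real.sqrt (N - 1) with hpdef
  have hN0 : (0:ℝ) < N := by linarith
  have hcos : Real.cos θ = (N - 2) / N := by
    rw [Real.cos_eq_sqrt_one_sub_sin_sq (by linarith [Real.pi_pos]) hθ1, hsin]
    have : 1 - (2 * p / N) ^ 2 = ((N-2)/N)^2 := by
      field_simp
      nlinarith [hp2]
    rw [this, Real.sqrt_sq (div_nonneg (by linarith) (by linarith))]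
  have hs2 : Real.sin (θ / 2) = 1 / q := by
    have h1 : Real.sin (θ/2) ^ 2 = (1/q)^2 := by
      have := Real.cos_sq (θ/2)
      have h2 : 2 * (θ/2) = θ := by ring
      rw [h2, hcos] at this
      have h3 := Real.sin_sq_add_cos_sq (θ/2)
      field_simp at this ⊢
      nlinarith [hq2]
    have h4 : 0 ≤ Real.sin (θ/2) :=
      Real.sin_nonneg_of_nonneg_of_le_pi (by linarith) (by linarith [Real.pi_pos])
    rw [← Real.sqrt_sq h4, h1, Real.sqrt_sq (by positivity)]
  have hc2 : Real.cos (θ / 2) = p / q := by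
    have h1 : Real.cos (θ/2) ^ 2 = (p/q)^2 := by
      have := Real.cos_sq (θ/2)
      have h2 : 2 * (θ/2) = θ := by ring
      rw [h2, hcos] at this
      field_simp at this ⊢
      nlinarith [hq2, hp2]
    have h4 : 0 ≤ Real.cos (θ/2) :=
      Real.cos_nonneg_of_mem_Icc ⟨by linarith [Real.pi_pos], by linarith⟩
    rw [← Real.sqrt_sq h4, h1, Real.sqrt_sq (by positivity)]
  -- key: rotation action of G
  have key : ∀ a b : ℝ,
      groverMat n m *ᵥ (fun x => ((a:ℝ):ℂ) * notMState n m x + ((b:ℝ):ℂ) * basisState n m x) =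
      fun x => ((a * Real.cos θ - b * Real.sin θ : ℝ):ℂ) * notMState n m x +
        ((a * Real.sin θ + b * Real.cos θ : ℝ):ℂ) * basisState n m x := by
    intro a b
    rw [groverMat, ← Matrix.mulVec_mulVec]
    have hO : oracleMat n m *ᵥ (fun x => ((a:ℝ):ℂ) * notMState n m x + ((b:ℝ):ℂ) * basisState n m x)
        = fun x => ((a:ℝ):ℂ) * notMState n m x + ((-b:ℝ):ℂ) * basisState n m x := by
      funext x
      rw [oracleMat, Matrix.mulVec_diagonal]
      by_cases h : x = m <;> simp [notMState, basisState, h] <;> push_cast <;> ring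
    rw [hO]
    funext x
    rw [diffusionMat, Matrix.sub_mulVec, Matrix.one_mulVec, Matrix.smul_mulVec]
    simp only [Pi.sub_apply, Pi.smul_apply, Matrix.mulVec, Matrix.vecMulVec_apply,
      dotProduct, uniformState, Pi.star_apply, Complex.star_def]
    have h1 : ∑ y : Fin (2^n), notMState n m y = ((p : ℝ) : ℂ) := by
      have e : ∀ y : Fin (2^n), notMState n m y
          = ((1/p:ℝ):ℂ) - (if y = m then ((1/p:ℝ):ℂ) else 0) := by
        intro y
        by_cases hy : y = m <;> simp [notMState, hy, ← hNdef, ← hpdef]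
      rw [Finset.sum_congr rfl (fun y _ => e y), Finset.sum_sub_distrib,
        Finset.sum_ite_eq']
      simp only [Finset.mem_univ, if_true, Finset.sum_const, Finset.card_univ,
        Fintype.card_fin, nsmul_eq_mul]
      have hNc : ((2^n : ℕ) : ℂ) = ((N:ℝ):ℂ) := by rw [hNdef]; push_cast; ring
      rw [hNc]
      have hre : N * (1/p) - 1/p = p := by
        field_simp
        nlinarith [hp2]
      exact_mod_cast hre
    have h2 : ∑ y : Fin (2^n), basisState n m y = 1 := by
      simp [basisState, Finset.sum_ite_eq']
    have h3 : ∑ y : Fin (2^n), (((a:ℝ):ℂ) * notMState n m y + ((-b:ℝ):ℂ) * basisState n m y)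
        = ((a * p - b : ℝ):ℂ) := by
      rw [Finset.sum_add_distrib, ← Finset.mul_sum, ← Finset.mul_sum, h1, h2]
      push_cast
      ring
    have hconj : (starRingEnd ℂ) ((1 / Real.sqrt (2^n) : ℝ) : ℂ) = ((1/q : ℝ) : ℂ) := by
      rw [Complex.conj_ofReal, ← hNdef, ← hqdef]
    have hφ : (((1 / Real.sqrt (2^n) : ℝ)) : ℂ) = ((1/q : ℝ) : ℂ) := by
      rw [← hNdef, ← hqdef]
    simp only [hconj, hφ, Complex.conj_ofReal, ← Finset.mul_sum]
    rw [h3]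
    rw [hsin, hcos]
    by_cases hx : x = m
    · simp only [notMState, basisState, hx, if_true, smul_eq_mul, mul_zero, mul_one, zero_add]
      have hre : 2 * ((1/q) * (1/q) * (a * p - b)) - (-b)
          = a * (2 * p / N) + b * ((N - 2) / N) := by
        rw [← hq2]
        field_simp
        ring
      exact_mod_cast hre
    · simp only [notMState, basisState, if_neg hx, smul_eq_mul, mul_zero, mul_one, add_zero]
      rw [← hNdef, ← hpdef]
      have hre : 2 * ((1/q) * (1/q) * (a * p - b)) - a * (1/p)
          = (a * ((N - 2) / N) - b * (2 * p / N)) * (1/p) := by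
        have hp2' : p^2 = q^2 - 1 := by rw [hq2]; exact hp2
        rw [← hq2]
        field_simp
        linear_combination (2 * a) * hp2'
      exact_mod_cast hre
  -- induction
  intro r
  induction r with
  | zero =>
    have hpC : (p:ℂ) ≠ 0 := Complex.ofReal_ne_zero.mpr hp0.ne'
    funext x
    by_cases h : x = m <;>
      simp [uniformState, notMState, basisState, h, ← hNdef, ← hqdef, ← hpdef, hs2, hc2] <;>
      push_cast <;>
      field_simp <;>
      rw [mul_comm ((q:ℝ):ℂ) ((p:ℝ):ℂ), ← div_div, div_self hpC]
  | succ r ih =>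
    rw [pow_succ', ← Matrix.mulVec_mulVec, ih]
    rw [key (Real.cos ((2 * (r:ℝ) + 1) * θ / 2)) (Real.sin ((2 * (r:ℝ) + 1) * θ / 2))]
    have hc : (2 * ((r+1 : ℕ) : ℝ) + 1) * θ / 2 = (2 * (r:ℝ) + 1) * θ / 2 + θ := by
      push_cast; ring
    rw [hc]
    funext x
    rw [Real.cos_add, Real.sin_add]
    push_cast
    ring
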